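/- arXiv:1105.5908 — 10 statements merged into one kernel-verified Lean document; each statement's English description precedes it below -/
import Mathlib

section
/- Conversely, let E be a g-isotropic subspace of (W,g) with a non-degenerate skew-symmetric bilinear form ω on E. Then there exists a unique g-skew-symmetric endomorphism τ of W with τ² = 0, im τ = E, and ω(e₁, τX) = g(e₁, X) for all e₁ ∈ E, X ∈ W. -/
/-- an isotropic subspace `E` with a non-degenerate skew 2-form `ω`
is the image of a unique `g`-skew 2-nilpotent endomorphism `τ` with
`ω(e₁, τX) = g(e₁, X)`. -/
theorem stmt5 {W : Type} [AddCommGroup W] [Module ℝ W] [FiniteDimensional ℝ W]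
    (g : W →ₗ[ℝ] W →ₗ[ℝ] ℝ)
    (hsym : ∀ u v, g u v = g v u)
    (hnd : ∀ u, (∀ v, g u v = 0) → u = 0)
    (E : Submodule ℝ W)
    (hiso : ∀ e ∈ E, ∀ f ∈ E, g e f = 0)
    (ω : E →ₗ[ℝ] E →ₗ[ℝ] ℝ)
    (hωskew : ∀ e f : E, ω e f = - ω f e)
    (hωnd : ∀ e : E, (∀ f : E, ω e f = 0) → e = 0) :
    ∃! τ : W →ₗ[ℝ] W,
      τ ∘ₗ τ = 0 ∧
      LinearMap.range τ = E ∧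
      (∀ u v : W, g (τ u) v = - g u (τ v)) ∧
      (∀ (e₁ : E) (X : W) (h : τ X ∈ E), ω e₁ ⟨τ X, h⟩ = g e₁ X) := by
  -- ω.flip : E →ₗ Dual E is bijective
  have hflipinj : Function.Injective (ω.flip : E →ₗ[ℝ] Module.Dual ℝ E) := by
    rw [← LinearMap.ker_eq_bot, LinearMap.ker_eq_bot']
    intro x hx
    apply hωnd
    intro f
    have := congrFun (congrArg (fun h => h.toFun) hx) f
    simp [LinearMap.flip_apply] at this
    rw [hωskew]; simp [this]
  have hflipsurj : Function.Surjective (ω.flip : E →ₗ[ℝ] Module.Dual ℝ E) :=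
    (LinearMap.injective_iff_surjective_of_finrank_eq_finrank
      (Subspace.dual_finrank_eq (V := E)).symm).mp hflipinj
  let σ : E ≃ₗ[ℝ] Module.Dual ℝ E := LinearEquiv.ofBijective ω.flip ⟨hflipinj, hflipsurj⟩
  -- φ : W →ₗ Dual E, φ X e = g X e
  let φ : W →ₗ[ℝ] Module.Dual ℝ E := E.dualRestrict ∘ₗ (g : W →ₗ[ℝ] Module.Dual ℝ W)
  have hφ : ∀ (X : W) (e : E), φ X e = g e X := fun X e => by
    simp [φ, Submodule.dualRestrict_apply, hsym]
  have hφsurj : Function.Surjective φ := by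
    have hginj : Function.Injective (g : W →ₗ[ℝ] Module.Dual ℝ W) := by
      rw [← LinearMap.ker_eq_bot, LinearMap.ker_eq_bot']
      intro x hx
      exact hnd x fun v => congrFun (congrArg (fun h => h.toFun) hx) v
    have hgsurj : Function.Surjective (g : W →ₗ[ℝ] Module.Dual ℝ W) :=
      (LinearMap.injective_iff_surjective_of_finrank_eq_finrank
        (Subspace.dual_finrank_eq (V := W)).symm).mp hginj
    exact (Subspace.dualRestrict_surjective).comp hgsurj
  let τ : W →ₗ[ℝ] W := E.subtype ∘ₗ (σ.symm : Module.Dual ℝ E →ₗ[ℝ] E) ∘ₗ φ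
  have hτmem : ∀ X, τ X ∈ E := fun X => (σ.symm (φ X)).2
  have hτE : ∀ X : W, (⟨τ X, hτmem X⟩ : E) = σ.symm (φ X) := fun X => rfl
  -- key defining property
  have hkey : ∀ (e : E) (X : W), ω e ⟨τ X, hτmem X⟩ = g e X := by
    intro e X
    rw [hτE]
    have : ω.flip (σ.symm (φ X)) = φ X := σ.apply_symm_apply (φ X)
    have h2 := congrFun (congrArg (fun h => h.toFun) this) e
    simpa [LinearMap.flip_apply, hφ] using h2
  -- characterization: any x ∈ E with ∀ e, ω e x = g e X equals τ X
  have huniq : ∀ (X : W) (x : E), (∀ e : E, ω e x = g e X) → (x : W) = τ X := by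
    intro X x hx
    have : ∀ e : E, ω e (x - ⟨τ X, hτmem X⟩) = 0 := by
      intro e; rw [map_sub, hx, hkey]; ring
    have h0 : x - ⟨τ X, hτmem X⟩ = 0 := by
      apply hωnd
      intro f
      rw [hωskew]; simp [this f]
    have := sub_eq_zero.mp h0
    exact congrArg Subtype.val this
  refine ⟨τ, ⟨?_, ?_, ?_, ?_⟩, ?_⟩
  · -- τ ∘ τ = 0
    ext X
    simp only [LinearMap.comp_apply, LinearMap.zero_apply]
    have : (⟨τ (τ X), hτmem _⟩ : E) = 0 := by
      apply hωnd
      intro f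
      rw [hωskew]
      have := hkey f (τ X)
      rw [this, hsym, hiso _ (hτmem X) _ f.2]
      ring
    exact congrArg Subtype.val this
  · -- range = E
    apply le_antisymm
    · rintro _ ⟨X, rfl⟩; exact hτmem X
    · intro y hy
      obtain ⟨X, hX⟩ := hφsurj (ω.flip ⟨y, hy⟩)
      refine ⟨X, ?_⟩
      refine (huniq X ⟨y, hy⟩ ?_).symm
      intro e
      rw [← hφ X e, hX]; rfl
  · -- skew
    intro u v
    have h1 : ω ⟨τ u, hτmem u⟩ ⟨τ v, hτmem v⟩ = g (⟨τ u, hτmem u⟩ : E) v := hkey _ v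
    have h2 : ω ⟨τ v, hτmem v⟩ ⟨τ u, hτmem u⟩ = g (⟨τ v, hτmem v⟩ : E) u := hkey _ u
    have := hωskew ⟨τ u, hτmem u⟩ ⟨τ v, hτmem v⟩
    rw [h1, h2] at this
    simpa [hsym u (τ v)] using this
  · intro e X h; exact hkey e X
  · -- uniqueness
    intro τ' ⟨_, hrange, _, hprop⟩
    ext X
    have hmem : τ' X ∈ E := hrange ▸ LinearMap.mem_range_self τ' X
    exact huniq X ⟨τ' X, hmem⟩ (fun e => hprop e X hmem)
end

section
/- In the generalized Riemannian setting W = V ⊕ V* with G determined by inner product γ and 2-form ψ (V± = graph of ♭_{ψ±γ}), a G-compatible generalized paracomplex structure Ψ corresponds bijectively to a γ-isometry F of V via Ψ(X, ♭_{ψ+γ}X) = (FX, ♭_{ψ−γ}FX); i.e., Ψ satisfies Ψ²=Id, g-skew-symmetry, and φΨ=−Ψφ if and only if F preserves γ: γ(FX,FY)=γ(X,Y). -/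
/-- the generalized paracomplex structure `Ψ` determined by the
bundle isomorphism `F` (via `Ψ(X,♭_{ψ+γ}X) = (FX,♭_{ψ−γ}FX)` and
`Ψ(X,♭_{ψ−γ}X) = (F⁻¹X,♭_{ψ+γ}F⁻¹X)`) satisfies `Ψ² = Id`, `g`-skew-symmetry
and `φΨ = −Ψφ` iff `F` is a `γ`-isometry. -/
theorem stmt8 {V : Type} [AddCommGroup V] [Module ℝ V] [FiniteDimensional ℝ V]
    (γ ψ : V →ₗ[ℝ] Module.Dual ℝ V)
    (hγsym : ∀ X Y, γ X Y = γ Y X)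
    (hγpos : ∀ X, X ≠ 0 → 0 < γ X X)
    (hψskew : ∀ X Y, ψ X Y = - ψ Y X)
    (g : (V × Module.Dual ℝ V) → (V × Module.Dual ℝ V) → ℝ)
    (hg : ∀ u v, g u v = u.2 v.1 + v.2 u.1)
    (φ : (V × Module.Dual ℝ V) →ₗ[ℝ] (V × Module.Dual ℝ V))
    (hφp : ∀ X : V, φ (X, ψ X + γ X) = (X, ψ X + γ X))
    (hφm : ∀ X : V, φ (X, ψ X - γ X) = -(X, ψ X - γ X))
    (F : V ≃ₗ[ℝ] V)
    (Ψ : (V × Module.Dual ℝ V) →ₗ[ℝ] (V × Module.Dual ℝ V))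
    (hΨp : ∀ X : V, Ψ (X, ψ X + γ X) = (F X, ψ (F X) - γ (F X)))
    (hΨm : ∀ X : V, Ψ (X, ψ X - γ X) = (F.symm X, ψ (F.symm X) + γ (F.symm X))) :
    (Ψ ∘ₗ Ψ = LinearMap.id ∧
     (∀ u v, g (Ψ u) v = - g u (Ψ v)) ∧
     φ ∘ₗ Ψ = - (Ψ ∘ₗ φ)) ↔
    (∀ X Y : V, γ (F X) (F Y) = γ X Y) := by
  constructor
  · rintro ⟨-, hskew, -⟩ X Y
    have h := hskew (X, ψ X + γ X) (F Y, ψ (F Y) - γ (F Y))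
    rw [hΨp] at h
    have h2 : Ψ (F Y, ψ (F Y) - γ (F Y)) = (Y, ψ Y + γ Y) := by
      have := hΨm (F Y)
      simpa [F.symm_apply_apply] using this
    rw [h2, hg, hg] at h
    simp only [LinearMap.sub_apply, LinearMap.add_apply] at h
    have hs1 := hψskew (F X) (F Y)
    have hs2 := hγsym (F X) (F Y)
    have hs3 := hψskew X Y
    have hs4 := hγsym X Y
    linarith
  · intro hF
    -- γ is bijective
    have hγinj : Function.Injective γ := by
      intro a b hab
      by_contra h
      have hne : a - b ≠ 0 := sub_ne_zero.mpr h
      have hpos := hγpos _ hne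
      have : γ (a - b) (a - b) = 0 := by
        rw [show γ (a - b) = γ a - γ b from map_sub γ a b, hab, sub_self]
        simp
      linarith
    have hγsurj : Function.Surjective γ :=
      (LinearMap.injective_iff_surjective_of_finrank_eq_finrank
        (Subspace.dual_finrank_eq).symm).mp hγinj
    -- decomposition of any element of W
    have hdec : ∀ w : V × Module.Dual ℝ V, ∃ A B : V,
        w = (A, ψ A + γ A) + (B, ψ B - γ B) := by
      rintro ⟨X, α⟩
      obtain ⟨C, hC⟩ := hγsurj (α - ψ X)
      obtain ⟨A, hA⟩ : ∃ A : V, A = (1/2 : ℝ) • (X + C) := ⟨_, rfl⟩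
      obtain ⟨B, hB⟩ : ∃ B : V, B = (1/2 : ℝ) • (X - C) := ⟨_, rfl⟩
      have h1 : A + B = X := by rw [hA, hB]; module
      have h2 : A - B = C := by rw [hA, hB]; module
      refine ⟨A, B, ?_⟩
      have key : ψ A + γ A + (ψ B - γ B) = α := by
        have e1 : ψ A + γ A + (ψ B - γ B) = ψ (A + B) + γ (A - B) := by
          rw [map_add, map_sub]; abel
        rw [e1, h1, h2, hC]; abel
      rw [Prod.mk_add_mk, h1, key]
    have hisom' : ∀ X Y : V, γ (F.symm X) (F.symm Y) = γ X Y := by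
      intro X Y
      have := hF (F.symm X) (F.symm Y)
      simpa [F.apply_symm_apply] using this.symm
    refine ⟨?_, ?_, ?_⟩
    · apply LinearMap.ext; intro w
      obtain ⟨A, B, rfl⟩ := hdec w
      simp only [LinearMap.comp_apply, LinearMap.id_apply, map_add, hΨp, hΨm,
        F.symm_apply_apply, F.apply_symm_apply]
    · intro u v
      obtain ⟨A, B, rfl⟩ := hdec u
      obtain ⟨C, D, rfl⟩ := hdec v
      simp only [map_add, hΨp, hΨm, hg, Prod.fst_add, Prod.snd_add,
        LinearMap.add_apply, LinearMap.sub_apply]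
      have k1 : γ (F A) D = γ A (F.symm D) := by
        rw [← hF A (F.symm D), F.apply_symm_apply]
      have k2 : γ (F.symm B) C = γ B (F C) := by
        rw [← hisom' B (F C), F.symm_apply_apply]
      have s1 := hψskew (F A) C; have s2 := hψskew (F A) D
      have s3 := hψskew (F.symm B) C; have s4 := hψskew (F.symm B) D
      have s5 := hψskew A (F C); have s6 := hψskew A (F.symm D)
      have s7 := hψskew B (F C); have s8 := hψskew B (F.symm D)
      have t1 := hγsym (F A) C; have t2 := hγsym (F A) D
      have t3 := hγsym (F.symm B) C; have t4 := hγsym (F.symm B) D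
      have t5 := hγsym A (F C); have t6 := hγsym A (F.symm D)
      have t7 := hγsym B (F C); have t8 := hγsym B (F.symm D)
      have k1' : γ (F A) C = γ A (F.symm C) := by
        rw [← hF A (F.symm C), F.apply_symm_apply]
      linarith
    · apply LinearMap.ext; intro w
      obtain ⟨A, B, rfl⟩ := hdec w
      simp only [LinearMap.comp_apply, LinearMap.neg_apply, map_add, hΨp, hΨm,
        hφp, hφm, map_neg]
      abel
end

section
/- Let Ψ be a generalized paracomplex structure compatible with a generalized Riemannian structure given by (γ, ψ), corresponding to the γ-isometry F of V. Then the two eigenspaces of Ψ are E = {(X + FX, ♭_ψ(X+FX) + ♭_γ(X − FX)) : X ∈ V} (for eigenvalue +1) and E' = {(X − FX, ♭_ψ(X−FX) + ♭_γ(X + FX)) : X ∈ V} (for eigenvalue −1), and each element of E and E' has a unique such representation. -/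
section aux

variable {V : Type} [AddCommGroup V] [Module ℝ V] [FiniteDimensional ℝ V]
    (γ ψ : V →ₗ[ℝ] Module.Dual ℝ V)

omit [FiniteDimensional ℝ V] in
lemma stmt9_gamma_inj (hγpos : ∀ X : V, X ≠ 0 → 0 < γ X X) :
    Function.Injective γ := by
  intro X Y h
  by_contra hne
  have h0 : X - Y ≠ 0 := sub_ne_zero.mpr hne
  have := hγpos _ h0
  have hz : γ (X - Y) (X - Y) = 0 := by
    have : γ (X - Y) = 0 := by rw [map_sub, h, sub_self]
    rw [this]; rfl
  rw [hz] at this; exact lt_irrefl 0 this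

lemma stmt9_gamma_surj (hγpos : ∀ X : V, X ≠ 0 → 0 < γ X X) :
    Function.Surjective γ := by
  have : Module.finrank ℝ V = Module.finrank ℝ (Module.Dual ℝ V) :=
    (Subspace.dual_finrank_eq).symm
  exact (LinearMap.injective_iff_surjective_of_finrank_eq_finrank this).mp
    (stmt9_gamma_inj γ hγpos)

/-- decomposition existence -/
lemma stmt9_decomp (hγpos : ∀ X : V, X ≠ 0 → 0 < γ X X)
    (w : V × Module.Dual ℝ V) :
    ∃ A B : V, w = (A, ψ A + γ A) + (B, ψ B - γ B) := by
  obtain ⟨x, ξ⟩ := w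
  obtain ⟨D, hD⟩ := stmt9_gamma_surj γ hγpos (ξ - ψ x)
  set A := (1/2 : ℝ) • (x + D) with hA
  set B := (1/2 : ℝ) • (x - D) with hB
  refine ⟨A, B, ?_⟩
  have hAB : A + B = x := by rw [hA, hB]; module
  have hABm : A - B = D := by rw [hA, hB]; module
  have fst : x = A + B := hAB.symm
  have snd : ξ = (ψ A + γ A) + (ψ B - γ B) := by
    have h : (ψ A + γ A) + (ψ B - γ B) = ψ (A + B) + γ (A - B) := by
      rw [map_add, map_sub]; abel
    rw [h, hAB, hABm, hD]; abel
  rw [show ((A, ψ A + γ A) : V × Module.Dual ℝ V) + (B, ψ B - γ B)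
      = (A + B, (ψ A + γ A) + (ψ B - γ B)) from rfl, ← fst, ← snd]

omit [FiniteDimensional ℝ V] in
/-- decomposition uniqueness -/
lemma stmt9_decomp_unique (hγpos : ∀ X : V, X ≠ 0 → 0 < γ X X)
    {A B A' B' : V}
    (h : ((A, ψ A + γ A) : V × Module.Dual ℝ V) + (B, ψ B - γ B)
        = (A', ψ A' + γ A') + (B', ψ B' - γ B')) :
    A = A' ∧ B = B' := by
  have h1 : A + B = A' + B' := congrArg Prod.fst h
  have h2 : (ψ A + γ A) + (ψ B - γ B) = (ψ A' + γ A') + (ψ B' - γ B') :=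
    congrArg Prod.snd h
  have h2' : ψ (A + B) + γ (A - B) = ψ (A' + B') + γ (A' - B') := by
    rw [map_add, map_add, map_sub, map_sub]
    rw [show ψ A + ψ B + (γ A - γ B) = (ψ A + γ A) + (ψ B - γ B) by abel, h2]
    abel
  rw [h1] at h2'
  have h3 : γ (A - B) = γ (A' - B') := add_left_cancel h2'
  have h4 : A - B = A' - B' := stmt9_gamma_inj γ hγpos h3
  constructor
  · have h5 : (2 : ℝ) • A = (2 : ℝ) • A' := by
      rw [two_smul, two_smul]
      calc A + A = (A + B) + (A - B) := by abel
        _ = (A' + B') + (A' - B') := by rw [h1, h4]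
        _ = A' + A' := by abel
    exact smul_right_injective V two_ne_zero h5
  · have h5 : (2 : ℝ) • B = (2 : ℝ) • B' := by
      rw [two_smul, two_smul]
      calc B + B = (A + B) - (A - B) := by abel
        _ = (A' + B') - (A' - B') := by rw [h1, h4]
        _ = B' + B' := by abel
    exact smul_right_injective V two_ne_zero h5

end aux

/-- the ±1-eigenspaces of `Ψ` consist exactly of the elements
`(X ± FX, ♭_ψ(X ± FX) + ♭_γ(X ∓ FX))`, with unique representation. -/
theorem stmt9 {V : Type} [AddCommGroup V] [Module ℝ V] [FiniteDimensional ℝ V]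
    (γ ψ : V →ₗ[ℝ] Module.Dual ℝ V)
    (hγsym : ∀ X Y, γ X Y = γ Y X)
    (hγpos : ∀ X, X ≠ 0 → 0 < γ X X)
    (hψskew : ∀ X Y, ψ X Y = - ψ Y X)
    (F : V ≃ₗ[ℝ] V)
    (hF : ∀ X Y : V, γ (F X) (F Y) = γ X Y)
    (Ψ : (V × Module.Dual ℝ V) →ₗ[ℝ] (V × Module.Dual ℝ V))
    (hΨp : ∀ X : V, Ψ (X, ψ X + γ X) = (F X, ψ (F X) - γ (F X)))
    (hΨm : ∀ X : V, Ψ (X, ψ X - γ X) = (F.symm X, ψ (F.symm X) + γ (F.symm X))) :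
    ∀ w : V × Module.Dual ℝ V,
      (Ψ w = w ↔ ∃! X : V, w = (X + F X, ψ (X + F X) + γ (X - F X))) ∧
      (Ψ w = -w ↔ ∃! X : V, w = (X - F X, ψ (X - F X) + γ (X + F X))) := by
  set p : V → V × Module.Dual ℝ V := fun X => (X, ψ X + γ X) with hp
  set m : V → V × Module.Dual ℝ V := fun X => (X, ψ X - γ X) with hm
  have key_p : ∀ X : V, (X + F X, ψ (X + F X) + γ (X - F X)) = p X + m (F X) := by
    intro X
    have h2 : ψ (X + F X) + γ (X - F X) = (ψ X + γ X) + (ψ (F X) - γ (F X)) := by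
      rw [map_add, map_sub]; abel
    rw [show p X + m (F X) = (X + F X, (ψ X + γ X) + (ψ (F X) - γ (F X))) from rfl, h2]
  have key_m : ∀ X : V, (X - F X, ψ (X - F X) + γ (X + F X)) = p X + m (-(F X)) := by
    intro X
    have h2 : ψ (X - F X) + γ (X + F X) = (ψ X + γ X) + (ψ (-(F X)) - γ (-(F X))) := by
      rw [map_sub, map_add, map_neg, map_neg]; abel
    have h1 : X - F X = X + -(F X) := sub_eq_add_neg X (F X)
    rw [show p X + m (-(F X)) = (X + -(F X), (ψ X + γ X) + (ψ (-(F X)) - γ (-(F X)))) from rfl,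
      h2, h1]
  have key_Ψp : ∀ X : V, Ψ (p X) = m (F X) := fun X => hΨp X
  have key_Ψm : ∀ X : V, Ψ (m X) = p (F.symm X) := fun X => hΨm X
  intro w
  obtain ⟨A, B, hw⟩ := stmt9_decomp γ ψ hγpos w
  rw [show ((A, ψ A + γ A) : V × Module.Dual ℝ V) + (B, ψ B - γ B) = p A + m B from rfl] at hw
  have hΨw : Ψ w = p (F.symm B) + m (F A) := by
    rw [hw, map_add, key_Ψp, key_Ψm, add_comm]
  have hnegp : ∀ X : V, -(p X) = p (-X) := by
    intro X
    show -((X, ψ X + γ X) : V × Module.Dual ℝ V) = (-X, ψ (-X) + γ (-X))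
    rw [Prod.neg_mk, map_neg, map_neg, neg_add]
  have hnegm : ∀ X : V, -(m X) = m (-X) := by
    intro X
    show -((X, ψ X - γ X) : V × Module.Dual ℝ V) = (-X, ψ (-X) - γ (-X))
    rw [Prod.neg_mk, map_neg, map_neg]
    congr 1
    abel
  constructor
  · constructor
    · intro h
      have heq : p (F.symm B) + m (F A) = p A + m B := by rw [← hΨw, h, hw]
      obtain ⟨h1, h2⟩ := stmt9_decomp_unique γ ψ hγpos heq
      refine ⟨A, ?_, ?_⟩
      · show w = (A + F A, ψ (A + F A) + γ (A - F A))
        rw [key_p, hw, h2]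
      · intro Y hY
        have hY' : w = p Y + m (F Y) := by rw [hY, key_p]
        have hwA : w = p A + m (F A) := by rw [hw, h2]
        exact (stmt9_decomp_unique γ ψ hγpos (hY'.symm.trans hwA)).1
    · rintro ⟨X, hX, -⟩
      have hX' : w = p X + m (F X) := by rw [hX]; exact key_p X
      rw [hX', map_add, key_Ψp, key_Ψm, F.symm_apply_apply, add_comm]
  · constructor
    · intro h
      have hneg : -w = p (-A) + m (-B) := by rw [hw, neg_add, hnegp, hnegm]
      have heq : p (F.symm B) + m (F A) = p (-A) + m (-B) := by rw [← hΨw, h, hneg]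
      obtain ⟨h1, h2⟩ := stmt9_decomp_unique γ ψ hγpos heq
      have hB : B = -(F A) := by
        have := congrArg F h1
        simpa using this
      refine ⟨A, ?_, ?_⟩
      · show w = (A - F A, ψ (A - F A) + γ (A + F A))
        rw [key_m, hw, hB]
      · intro Y hY
        have hY' : w = p Y + m (-(F Y)) := by rw [hY, key_m]
        have hwA : w = p A + m (-(F A)) := by rw [hw, hB]
        exact (stmt9_decomp_unique γ ψ hγpos (hY'.symm.trans hwA)).1
    · rintro ⟨X, hX, -⟩
      have hX' : w = p X + m (-(F X)) := by rw [hX]; exact key_m X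
      rw [hX', map_add, key_Ψp, key_Ψm, neg_add, hnegp, hnegm]
      rw [map_neg, F.symm_apply_apply, neg_neg, add_comm]
end

section
/- Let γ be an inner product on V, ψ ∈ Λ²V*, P a bivector with ♯_P : V* → V, and define Q± = ±♯_γ ∘ ♭_{ψ±γ} ∘ ♯_P ∘ ♭_γ ∈ End(V). Assume Q⁻ + Id is invertible. Then F := (Q⁺ − Id)(Q⁻ + Id)⁻¹ is a γ-isometry: γ(FX, FY) = γ(X,Y) for all X, Y ∈ V. -/
/-- with `Q± = ±♯_γ ∘ ♭_{ψ±γ} ∘ ♯_P ∘ ♭_γ` and `Q⁻ + Id`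
invertible, `F = (Q⁺ − Id)(Q⁻ + Id)⁻¹` is a `γ`-isometry. -/
theorem stmt11 {V : Type} [AddCommGroup V] [Module ℝ V] [FiniteDimensional ℝ V]
    (γ ψ : V →ₗ[ℝ] Module.Dual ℝ V)
    (hγsym : ∀ X Y, γ X Y = γ Y X)
    (hγpos : ∀ X, X ≠ 0 → 0 < γ X X)
    (hψskew : ∀ X Y, ψ X Y = - ψ Y X)
    (P : Module.Dual ℝ V →ₗ[ℝ] V)
    (hPskew : ∀ α β : Module.Dual ℝ V, α (P β) = - β (P α))
    (Qp Qm : V →ₗ[ℝ] V)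
    (hQp : ∀ X Z : V, γ (Qp X) Z = (ψ + γ) (P (γ X)) Z)
    (hQm : ∀ X Z : V, γ (Qm X) Z = - ((ψ - γ) (P (γ X)) Z))
    (R : V →ₗ[ℝ] V)
    (hR1 : (Qm + LinearMap.id) ∘ₗ R = LinearMap.id)
    (hR2 : R ∘ₗ (Qm + LinearMap.id) = LinearMap.id) :
    ∀ X Y : V,
      γ ((Qp - (LinearMap.id : V →ₗ[ℝ] V)) (R X)) ((Qp - (LinearMap.id : V →ₗ[ℝ] V)) (R Y)) = γ X Y := by
  -- injectivity of γ
  have hinj : ∀ W : V, (∀ Z : V, γ W Z = 0) → W = 0 := by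
    intro W h
    by_contra hW
    have := hγpos W hW
    rw [h W] at this
    exact lt_irrefl 0 this
  -- Qp Y + Qm Y = 2 • P (γ Y)
  have hsum : ∀ Y : V, Qp Y + Qm Y = (2 : ℝ) • P (γ Y) := by
    intro Y
    have : ∀ Z : V, γ (Qp Y + Qm Y - (2 : ℝ) • P (γ Y)) Z = 0 := by
      intro Z
      have h1 := hQp Y Z
      have h2 := hQm Y Z
      simp only [LinearMap.add_apply, LinearMap.sub_apply] at h1 h2
      simp only [map_sub, map_add, map_smul, LinearMap.sub_apply, LinearMap.add_apply,
        LinearMap.smul_apply, smul_eq_mul]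
      linarith
    have h0 := hinj _ this
    have : Qp Y + Qm Y = (2 : ℝ) • P (γ Y) := by
      have := sub_eq_zero.mp (by simpa using h0)
      exact this
    exact this
  -- key identity
  have key : ∀ X Y : V, γ (Qp X - X) (Qp Y - Y) = γ (Qm X + X) (Qm Y + Y) := by
    intro X Y
    have h1 := hQp X (Qp Y)
    have h3 := hQm X (Qm Y)
    have h2 := hQp X Y
    have h4 := hQm X Y
    have h5 := hQp Y X
    have h6 := hQm Y X
    have h7 := hQp Y (P (γ X))
    have h8 := hQm Y (P (γ X))
    simp only [LinearMap.add_apply, LinearMap.sub_apply] at h1 h2 h3 h4 h5 h6 h7 h8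
    -- ψ(P γX)(Qp Y) + ψ(P γX)(Qm Y) = 2 ψ(P γX)(P γY)
    have h9 : ψ (P (γ X)) (Qp Y) + ψ (P (γ X)) (Qm Y)
        = 2 * ψ (P (γ X)) (P (γ Y)) := by
      have := congrArg (ψ (P (γ X))) (hsum Y)
      rw [map_add] at this
      rw [this]
      simp [smul_eq_mul]
      try ring
    have h10 := hψskew (P (γ X)) (P (γ Y))
    have h11 := hPskew (γ X) (γ Y)
    have h12 := hγsym X (P (γ Y))
    have h13 := hγsym Y (P (γ X))
    have hs1 := hγsym X (Qp Y)
    have hs2 := hγsym X (Qm Y)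
    have hs3 := hγsym (P (γ X)) (Qp Y)
    have hs4 := hγsym (P (γ X)) (Qm Y)
    simp only [map_sub, map_add, LinearMap.sub_apply, LinearMap.add_apply]
    -- note: γ X (P (γ Y)) is (γ X) applied, same as hPskew terms
    linarith [hγsym X Y]
  intro X Y
  have hF : ∀ W : V, Qm (R W) + R W = W := by
    intro W
    have := congrArg (fun f : V →ₗ[ℝ] V => f W) hR1
    simpa using this
  have hFX := hF X
  have hFY := hF Y
  have := key (R X) (R Y)
  simp only [LinearMap.sub_apply, LinearMap.id_apply]
  rw [this, hFX, hFY]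
end

section
/- Let (W, g, φ, G) be a generalized Riemannian vector space and E a g-isotropic subspace. Then φ(E) is also g-isotropic, φ(E^{⊥_g}) = (φ(E))^{⊥_g}, and (E^{⊥_G})^{⊥_g} = (E^{⊥_g})^{⊥_G} = φ(E). -/
/-- for a `g`-isotropic subspace `E` of a generalized Riemannian
vector space, `φ(E)` is `g`-isotropic, `φ(E^{⊥_g}) = (φE)^{⊥_g}` and
`(E^{⊥_G})^{⊥_g} = (E^{⊥_g})^{⊥_G} = φ(E)`. -/
theorem stmt13 {W : Type} [AddCommGroup W] [Module ℝ W] [FiniteDimensional ℝ W]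
    (g : W →ₗ[ℝ] W →ₗ[ℝ] ℝ)
    (hsym : ∀ u v, g u v = g v u)
    (hnd : ∀ u, (∀ v, g u v = 0) → u = 0)
    (φ : W →ₗ[ℝ] W)
    (hφ2 : φ ∘ₗ φ = LinearMap.id)
    (hφiso : ∀ u v, g (φ u) (φ v) = g u v)
    (hpos : ∀ u, u ≠ 0 → 0 < g (φ u) u)
    (E : Submodule ℝ W)
    (hiso : ∀ e ∈ E, ∀ f ∈ E, g e f = 0) :
    let G : W → W → ℝ := fun u v => g (φ u) v
    let perpg : Set W → Set W := fun s => {w | ∀ e ∈ s, g w e = 0}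
    let perpG : Set W → Set W := fun s => {w | ∀ e ∈ s, G w e = 0}
    (∀ x ∈ φ '' (E : Set W), ∀ y ∈ φ '' (E : Set W), g x y = 0) ∧
    φ '' perpg (E : Set W) = perpg (φ '' (E : Set W)) ∧
    perpg (perpG (E : Set W)) = φ '' (E : Set W) ∧
    perpG (perpg (E : Set W)) = φ '' (E : Set W) := by
  intro G perpg perpG
  have φφ : ∀ w, φ (φ w) = w := fun w => by
    have := LinearMap.ext_iff.mp hφ2 w
    simpa using this
  have hrefl : LinearMap.BilinForm.IsRefl g := fun u v h => by
    rw [hsym]; exact h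
  have hndg : LinearMap.BilinForm.Nondegenerate g :=
    ⟨fun u h => hnd u h, fun u h => hnd u fun v => by rw [hsym]; exact h v⟩
  -- perpg of a submodule is the mathlib orthogonal complement
  have key : ∀ S : Submodule ℝ W,
      perpg (S : Set W) = ((LinearMap.BilinForm.orthogonal g S : Submodule ℝ W) : Set W) := by
    intro S
    ext w
    constructor
    · intro h n hn
      have := h n hn
      rw [hsym]
      exact this
    · intro h e he
      rw [hsym]
      exact h e he
  have dperp : ∀ S : Submodule ℝ W, perpg (perpg (S : Set W)) = (S : Set W) := by
    intro S
    rw [key S, key, LinearMap.BilinForm.orthogonal_orthogonal hndg hrefl]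
  -- part 2
  have part2 : φ '' perpg (E : Set W) = perpg (φ '' (E : Set W)) := by
    ext w
    constructor
    · rintro ⟨u, hu, rfl⟩ e ⟨f, hf, rfl⟩
      rw [hφiso]
      exact hu f hf
    · intro hw
      refine ⟨φ w, ?_, φφ w⟩
      intro e he
      have := hw (φ e) ⟨e, he, rfl⟩
      show g (φ w) e = 0
      rw [← φφ e, hφiso]
      exact this
  -- perpG of any set is φ '' perpg of it
  have keyG : ∀ s : Set W, perpG s = φ '' perpg s := by
    intro s
    ext w
    constructor
    · intro hw
      exact ⟨φ w, fun e he => hw e he, φφ w⟩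
    · rintro ⟨u, hu, rfl⟩ e he
      show g (φ (φ u)) e = 0
      rw [φφ]
      exact hu e he
  refine ⟨?_, part2, ?_, ?_⟩
  · rintro x ⟨e, he, rfl⟩ y ⟨f, hf, rfl⟩
    rw [hφiso]
    exact hiso e he f hf
  · rw [keyG, part2]
    have : φ '' (E : Set W) = ((E.map φ : Submodule ℝ W) : Set W) := rfl
    rw [this, dperp]
  · rw [keyG, dperp]
end

section
/- Let (W, g, φ, G) be a generalized Riemannian vector space, E a g-isotropic subspace, and S the G-orthogonal complement of E within E^{⊥_g} (so E^{⊥_g} = E ⊕_{⊥_G} S). Then W decomposes G-orthogonally as W = (E ⊕_{⊥_G} φ(E)) ⊕_{⊥_G} S, and both E ⊕ φ(E) and S are invariant under φ. -/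
/-- with `S` the `G`-orthogonal complement of `E` inside
`E^{⊥_g}`, one has the `G`-orthogonal decomposition
`W = (E ⊕_{⊥_G} φ(E)) ⊕_{⊥_G} S`, with `E ⊕ φ(E)` and `S` invariant by `φ`. -/
theorem stmt14 {W : Type} [AddCommGroup W] [Module ℝ W] [FiniteDimensional ℝ W]
    (g : W →ₗ[ℝ] W →ₗ[ℝ] ℝ)
    (hsym : ∀ u v, g u v = g v u)
    (hnd : ∀ u, (∀ v, g u v = 0) → u = 0)
    (φ : W →ₗ[ℝ] W)
    (hφ2 : φ ∘ₗ φ = LinearMap.id)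
    (hφiso : ∀ u v, g (φ u) (φ v) = g u v)
    (hpos : ∀ u, u ≠ 0 → 0 < g (φ u) u)
    (E : Submodule ℝ W)
    (hiso : ∀ e ∈ E, ∀ f ∈ E, g e f = 0) :
    let G : W → W → ℝ := fun u v => g (φ u) v
    let S : Set W := {s | (∀ e ∈ E, g s e = 0) ∧ (∀ e ∈ E, G s e = 0)}
    let EφE : Set W := {w | ∃ e ∈ E, ∃ f ∈ E, w = e + φ f}
    (∀ w : W, ∃ e ∈ E, ∃ f ∈ φ '' (E : Set W), ∃ s ∈ S, w = e + f + s) ∧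
    (∀ e ∈ E, ∀ f ∈ φ '' (E : Set W), G e f = 0) ∧
    (∀ e ∈ E, ∀ s ∈ S, G e s = 0) ∧
    (∀ f ∈ φ '' (E : Set W), ∀ s ∈ S, G f s = 0) ∧
    φ '' EφE = EφE ∧
    φ '' S = S := by
  intro G S EφE
  have hφ2' : ∀ w, φ (φ w) = w := fun w => congrArg (fun ψ => ψ w) hφ2
  have hGsymm : ∀ u v, g (φ u) v = g (φ v) u := by
    intro u v
    calc g (φ u) v = g (φ (φ u)) (φ v) := (hφiso (φ u) v).symm
    _ = g (φ v) u := by rw [hφ2', hsym]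
  -- B is the bilinear form G
  set B : LinearMap.BilinForm ℝ W := (g ∘ₗ φ) with hB
  have hBapp : ∀ u v, B u v = g (φ u) v := fun _ _ => rfl
  have hBrefl : B.IsRefl := by
    intro u v h
    rw [hBapp] at h ⊢
    rw [hGsymm]; exact h
  set U : Submodule ℝ W := E ⊔ E.map φ with hU
  have hrestr : (B.restrict U).Nondegenerate := by
    refine (LinearMap.IsRefl.nondegenerate_iff_separatingLeft (B := B.restrict U) (fun x y h => hBrefl x y h)).mpr ?_
    intro u hu
    by_contra hne
    have h0 : (u : W) ≠ 0 := fun h => hne (Subtype.ext h)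
    have h : g (φ (u : W)) (u : W) = 0 := hu u
    exact (hpos u h0).ne' h
  have hcompl : IsCompl U (B.orthogonal U) :=
    B.isCompl_orthogonal_of_restrict_nondegenerate hBrefl hrestr
  -- orthogonal of U is contained in S
  have horthS : ∀ s ∈ B.orthogonal U, s ∈ S := by
    intro s hs
    have hE : ∀ e ∈ E, B e s = 0 := fun e he =>
      hs e (Submodule.mem_sup_left he)
    have hφE : ∀ e ∈ E, B (φ e) s = 0 := fun e he =>
      hs (φ e) (Submodule.mem_sup_right (Submodule.mem_map_of_mem he))
    constructor
    · intro e he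
      have := hφE e he
      rw [hBapp, hφ2'] at this
      rw [hsym]; exact this
    · intro e he
      have := hE e he
      rw [hBapp] at this
      show g (φ s) e = 0
      rw [hGsymm]; exact this
  refine ⟨?_, ?_, ?_, ?_, ?_, ?_⟩
  · -- decomposition
    intro w
    have hw : w ∈ U ⊔ B.orthogonal U := by rw [hcompl.sup_eq_top]; trivial
    obtain ⟨u, hu, s, hs, rfl⟩ := Submodule.mem_sup.mp hw
    obtain ⟨e, he, f, hf, rfl⟩ := Submodule.mem_sup.mp hu
    obtain ⟨f₀, hf₀, rfl⟩ := Submodule.mem_map.mp hf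
    exact ⟨e, he, φ f₀, ⟨f₀, hf₀, rfl⟩, s, horthS s hs, rfl⟩
  · rintro e he f ⟨f₀, hf₀, rfl⟩
    show g (φ e) (φ f₀) = 0
    rw [hφiso]; exact hiso e he f₀ hf₀
  · intro e he s hs
    show g (φ e) s = 0
    rw [hGsymm]; exact hs.2 e he
  · rintro f ⟨f₀, hf₀, rfl⟩ s hs
    show g (φ (φ f₀)) s = 0
    rw [hφ2', hsym]; exact hs.1 f₀ hf₀
  · -- φ '' EφE = EφE
    have hsub : ∀ w ∈ EφE, φ w ∈ EφE := by
      rintro w ⟨e, he, f, hf, rfl⟩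
      exact ⟨f, hf, e, he, by rw [map_add, hφ2', add_comm]⟩
    apply Set.eq_of_subset_of_subset
    · rintro _ ⟨w, hw, rfl⟩; exact hsub w hw
    · intro w hw
      exact ⟨φ w, hsub w hw, hφ2' w⟩
  · -- φ '' S = S
    have hsub : ∀ w ∈ S, φ w ∈ S := by
      rintro w ⟨h1, h2⟩
      refine ⟨fun e he => ?_, fun e he => ?_⟩
      · exact h2 e he
      · show g (φ (φ w)) e = 0
        rw [hφ2']; exact h1 e he
    apply Set.eq_of_subset_of_subset
    · rintro _ ⟨w, hw, rfl⟩; exact hsub w hw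
    · intro w hw
      exact ⟨φ w, hsub w hw, hφ2' w⟩
end

section
/- Let τ be a g-skew-symmetric 2-nilpotent endomorphism of a generalized Riemannian vector space (W,g,φ,G) with E = im τ, and let λ = τ∘φ restricted to E. Then G(τu, τv) = G(u,v) for all u, v ∈ φ(E) if and only if λ² = −Id on E. -/
/-- `G(τu, τv) = G(u,v)` for all `u, v ∈ φ(E)` iff
`λ = τ∘φ` satisfies `λ² = −Id` on `E = im τ`. -/
theorem stmt15 {W : Type} [AddCommGroup W] [Module ℝ W] [FiniteDimensional ℝ W]
    (g : W →ₗ[ℝ] W →ₗ[ℝ] ℝ)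
    (hsym : ∀ u v, g u v = g v u)
    (hnd : ∀ u, (∀ v, g u v = 0) → u = 0)
    (φ : W →ₗ[ℝ] W)
    (hφ2 : φ ∘ₗ φ = LinearMap.id)
    (hφiso : ∀ u v, g (φ u) (φ v) = g u v)
    (hpos : ∀ u, u ≠ 0 → 0 < g (φ u) u)
    (τ : W →ₗ[ℝ] W)
    (hτ2 : τ ∘ₗ τ = 0)
    (hskew : ∀ u v, g (τ u) v = - g u (τ v)) :
    (∀ u ∈ Submodule.map φ (LinearMap.range τ),
     ∀ v ∈ Submodule.map φ (LinearMap.range τ),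
        g (φ (τ u)) (τ v) = g (φ u) v) ↔
    (∀ e ∈ LinearMap.range τ, τ (φ (τ (φ e))) = -e) := by
  have hφ : ∀ x, φ (φ x) = x := fun x => congrArg (· x) hφ2
  constructor
  · intro H e he
    -- λ : E → E, restriction of τ ∘ φ
    have hmem : ∀ x ∈ LinearMap.range τ, (τ ∘ₗ φ) x ∈ LinearMap.range τ := by
      intro x _; exact ⟨φ x, rfl⟩
    set L := (τ ∘ₗ φ).restrict hmem with hL
    have hinj : Function.Injective L := by
      rw [injective_iff_map_eq_zero]
      rintro ⟨x, w, rfl⟩ h0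
      have h0' : τ (φ (τ w)) = 0 := congrArg Subtype.val h0
      ext
      by_contra hne
      have hne' : τ w ≠ 0 := fun h => hne (by simpa using h)
      have hzero : g (φ (τ w)) (τ w) = 0 := by
        have hs := hskew (φ (τ w)) w
        rw [h0'] at hs
        simp at hs
        linarith
      have := hpos (τ w) hne'
      linarith
    have hsurj : Function.Surjective L := LinearMap.injective_iff_surjective.mp hinj
    -- main argument
    obtain ⟨w, hw⟩ := id he
    have hz : τ (φ (τ (φ e))) + e = 0 := by
      apply hnd
      intro x
      -- τ x ∈ E, so τ x = τ (φ s) for some s ∈ E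
      obtain ⟨⟨s, hsE⟩, hs⟩ := hsurj ⟨τ x, ⟨x, rfl⟩⟩
      have hs' : τ (φ s) = τ x := congrArg Subtype.val hs
      have h1 : g (τ (φ (τ (φ e)))) x = - g (φ (τ (φ e))) (τ x) := hskew _ _
      have h2 : g (φ (τ (φ e))) (τ (φ s)) = g (φ (φ e)) (φ s) :=
        H (φ e) ⟨e, he, rfl⟩ (φ s) ⟨s, hsE, rfl⟩
      have h3 : g e x = - g w (τ x) := by rw [← hw]; exact hskew _ _
      have h4 : g (τ w) (φ s) = - g w (τ (φ s)) := hskew _ _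
      rw [hw] at h4
      have h5 : g (φ (φ e)) (φ s) = g e (φ s) := by rw [hφ]
      rw [map_add, LinearMap.add_apply, h1, h3, ← hs', h2, h5]
      linarith [h4]
    exact eq_neg_of_add_eq_zero_left hz
  · intro H u hu v hv
    obtain ⟨e, he, rfl⟩ := hu
    obtain ⟨f, hf, rfl⟩ := hv
    have h1 : g (τ (φ (τ (φ e)))) (φ f) = - g (φ (τ (φ e))) (τ (φ f)) := hskew _ _
    rw [H e he] at h1
    have h2 : g (φ (φ e)) (φ f) = g e (φ f) := by rw [hφ]
    simp only [map_neg, LinearMap.neg_apply] at h1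
    rw [h2]
    linarith
end

section
/- Let τ be 2-nilpotent, g-skew-symmetric, G-compatible on (W,g,φ,G). Then the endomorphism λ̃ = τ∘φ of W satisfies λ̃³ + λ̃ = 0, and likewise λ̃' = φ∘τ satisfies λ̃'³ + λ̃' = 0. -/
/-- for a `G`-compatible 2-nilpotent `τ`, `λ̃ = τ∘φ` satisfies
`λ̃³ + λ̃ = 0`, and `λ̃' = φ∘τ` satisfies `λ̃'³ + λ̃' = 0`. -/
theorem stmt17 {W : Type} [AddCommGroup W] [Module ℝ W] [FiniteDimensional ℝ W]
    (g : W →ₗ[ℝ] W →ₗ[ℝ] ℝ)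
    (hsym : ∀ u v, g u v = g v u)
    (hnd : ∀ u, (∀ v, g u v = 0) → u = 0)
    (φ : W →ₗ[ℝ] W)
    (hφ2 : φ ∘ₗ φ = LinearMap.id)
    (hφiso : ∀ u v, g (φ u) (φ v) = g u v)
    (hpos : ∀ u, u ≠ 0 → 0 < g (φ u) u)
    (τ : W →ₗ[ℝ] W)
    (hτ2 : τ ∘ₗ τ = 0)
    (hskew : ∀ u v, g (τ u) v = - g u (τ v))
    (hcompat : ∀ e ∈ LinearMap.range τ, τ (φ (τ (φ e))) = -e) :
    (τ ∘ₗ φ) ∘ₗ (τ ∘ₗ φ) ∘ₗ (τ ∘ₗ φ) + τ ∘ₗ φ = 0 ∧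
    (φ ∘ₗ τ) ∘ₗ (φ ∘ₗ τ) ∘ₗ (φ ∘ₗ τ) + φ ∘ₗ τ = 0 := by
  constructor <;> ext u <;>
    simp only [LinearMap.add_apply, LinearMap.comp_apply, LinearMap.zero_apply]
  · have h := hcompat (τ (φ u)) ⟨φ u, rfl⟩
    rw [h]; abel
  · have h := hcompat (τ u) ⟨u, rfl⟩
    rw [h, map_neg]; abel
end

section
/- Let (W,g,φ,G) be a generalized Riemannian vector space and τ a G-compatible 2-nilpotent g-skew-symmetric endomorphism. Then Φ := τ∘φ + φ∘τ satisfies Φ³ + Φ = 0, g(Φu,v) + g(u,Φv) = 0, and G(Φu,v) + G(u,Φv) = 0 for all u,v ∈ W (i.e., Φ is a generalized metric F-structure). -/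
/-- `Φ = τ∘φ + φ∘τ` is a generalized metric F-structure:
`Φ³ + Φ = 0`, `Φ` is `g`-skew-symmetric and `G`-skew-symmetric. -/
theorem stmt18 {W : Type} [AddCommGroup W] [Module ℝ W] [FiniteDimensional ℝ W]
    (g : W →ₗ[ℝ] W →ₗ[ℝ] ℝ)
    (hsym : ∀ u v, g u v = g v u)
    (hnd : ∀ u, (∀ v, g u v = 0) → u = 0)
    (φ : W →ₗ[ℝ] W)
    (hφ2 : φ ∘ₗ φ = LinearMap.id)
    (hφiso : ∀ u v, g (φ u) (φ v) = g u v)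
    (hpos : ∀ u, u ≠ 0 → 0 < g (φ u) u)
    (τ : W →ₗ[ℝ] W)
    (hτ2 : τ ∘ₗ τ = 0)
    (hskew : ∀ u v, g (τ u) v = - g u (τ v))
    (hcompat : ∀ e ∈ LinearMap.range τ, τ (φ (τ (φ e))) = -e) :
    let Φ : W →ₗ[ℝ] W := τ ∘ₗ φ + φ ∘ₗ τ
    let G : W → W → ℝ := fun u v => g (φ u) v
    Φ ∘ₗ Φ ∘ₗ Φ + Φ = 0 ∧
    (∀ u v : W, g (Φ u) v + g u (Φ v) = 0) ∧
    (∀ u v : W, G (Φ u) v + G u (Φ v) = 0) := by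
  intro Φ G
  have hφ : ∀ x, φ (φ x) = x := fun x => LinearMap.congr_fun hφ2 x
  have hτ : ∀ x, τ (τ x) = 0 := fun x => by
    simpa using LinearMap.congr_fun hτ2 x
  have hc : ∀ x, τ (φ (τ (φ (τ x)))) = - τ x := fun x => hcompat (τ x) ⟨x, rfl⟩
  have hiso' : ∀ u v, g (φ u) v = g u (φ v) := fun u v => by
    calc g (φ u) v = g (φ u) (φ (φ v)) := by rw [hφ]
    _ = g u (φ v) := hφiso _ _
  have h2 : ∀ u v, g (τ (φ u)) v = - g u (φ (τ v)) := fun u v => by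
    rw [hskew, hiso']
  have h3 : ∀ u v, g (φ (τ u)) v = - g u (τ (φ v)) := fun u v => by
    rw [hiso', hskew]
  have hΦ : ∀ x, Φ x = τ (φ x) + φ (τ x) := fun x => rfl
  refine ⟨?_, ?_, ?_⟩
  · ext w
    show Φ (Φ (Φ w)) + Φ w = 0
    simp only [hΦ, map_add, hφ, hτ, map_zero, zero_add, add_zero, hc, map_neg]
    abel
  · intro u v
    rw [hΦ u, hΦ v, map_add, LinearMap.add_apply, map_add, h2, h3]
    ring
  · intro u v
    show g (φ (Φ u)) v + g (φ u) (Φ v) = 0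
    rw [hΦ u, hΦ v, map_add, hφ, map_add, LinearMap.add_apply, map_add,
      hiso' (τ (φ u)) v, hskew (φ u) (φ v), hskew u v, hφiso u (τ v)]
    ring
end

section
/- Let (W,g,φ,G) be a generalized Riemannian vector space with dim W = 2m and suppose τ is a G-compatible generalized almost tangent structure (τ²=0, g-skew-symmetric, rank τ = m), so W = E ⊕ φ(E) with E = im τ. Define Φ = τφ + φτ and let Ψ be Id on E and −Id on φ(E). Then Φ² = −Id, Ψ² = Id, Φ∘Ψ = Ψ∘Φ, both Φ and Ψ are g-skew-symmetric and G-compatible, and τ = (1/2)·Φ∘(Id + Ψ)∘φ. -/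
/-- for a `G`-compatible generalized almost tangent structure `τ`
(`τ² = 0`, `g`-skew, `rank τ = m = (dim W)/2`, so `W = E ⊕ φ(E)`), with
`Φ = τφ + φτ` and `Ψ = Id` on `E = im τ`, `−Id` on `φ(E)`, one has `Φ² = −Id`,
`Ψ² = Id`, `ΦΨ = ΨΦ`, `Φ` and `Ψ` are `g`-skew-symmetric and `G`-compatible,
and `τ = (1/2)Φ∘(Id + Ψ)∘φ`. -/
theorem stmt19 {W : Type} [AddCommGroup W] [Module ℝ W] [FiniteDimensional ℝ W]
    (m : ℕ) (hdim : Module.finrank ℝ W = 2 * m)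
    (g : W →ₗ[ℝ] W →ₗ[ℝ] ℝ)
    (hsym : ∀ u v, g u v = g v u)
    (hnd : ∀ u, (∀ v, g u v = 0) → u = 0)
    (φ : W →ₗ[ℝ] W)
    (hφ2 : φ ∘ₗ φ = LinearMap.id)
    (hφiso : ∀ u v, g (φ u) (φ v) = g u v)
    (hpos : ∀ u, u ≠ 0 → 0 < g (φ u) u)
    (τ : W →ₗ[ℝ] W)
    (hτ2 : τ ∘ₗ τ = 0)
    (hskew : ∀ u v, g (τ u) v = - g u (τ v))
    (hrank : Module.finrank ℝ (LinearMap.range τ) = m)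
    (hcompat : ∀ e ∈ LinearMap.range τ, τ (φ (τ (φ e))) = -e)
    (Ψ : W →ₗ[ℝ] W)
    (hΨE : ∀ e ∈ LinearMap.range τ, Ψ e = e)
    (hΨφE : ∀ e ∈ LinearMap.range τ, Ψ (φ e) = -(φ e)) :
    let Φ : W →ₗ[ℝ] W := τ ∘ₗ φ + φ ∘ₗ τ
    let G : W → W → ℝ := fun u v => g (φ u) v
    Φ ∘ₗ Φ = -LinearMap.id ∧
    Ψ ∘ₗ Ψ = LinearMap.id ∧
    Φ ∘ₗ Ψ = Ψ ∘ₗ Φ ∧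
    (∀ u v : W, g (Φ u) v = - g u (Φ v)) ∧
    (∀ u v : W, g (Ψ u) v = - g u (Ψ v)) ∧
    (∀ u v : W, G (Φ u) (Φ v) = G u v) ∧
    (∀ u v : W, G (Ψ u) (Ψ v) = G u v) ∧
    τ = (1/2 : ℝ) • (Φ ∘ₗ (LinearMap.id + Ψ) ∘ₗ φ) := by
  intro Φ G
  have hφφ : ∀ x, φ (φ x) = x := fun x => congrArg (· x) hφ2 |>.trans rfl
  have hττ : ∀ x, τ (τ x) = 0 := fun x => congrArg (· x) hτ2 |>.trans rfl
  set E := LinearMap.range τ with hE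
  have hφinj : Function.Injective φ := by
    intro a b hab
    have : φ (φ a) = φ (φ b) := by rw [hab]
    rwa [hφφ, hφφ] at this
  -- kernel of τ equals E
  have hker : LinearMap.ker τ = E := by
    have hle : E ≤ LinearMap.ker τ := by
      rintro x ⟨a, rfl⟩
      exact LinearMap.mem_ker.mpr (hττ a)
    have h1 : Module.finrank ℝ E + Module.finrank ℝ (LinearMap.ker τ) = 2 * m := by
      rw [← hdim]; exact LinearMap.finrank_range_add_finrank_ker τ
    have h2 : Module.finrank ℝ (LinearMap.ker τ) = m := by omega
    exact (Submodule.eq_of_le_of_finrank_le hle (by rw [h2, hrank])).symm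
  have hτE : ∀ e ∈ E, τ e = 0 := fun e he => LinearMap.mem_ker.mp (hker ▸ he)
  have hiso : ∀ x ∈ E, ∀ y ∈ E, g x y = 0 := by
    rintro x ⟨a, rfl⟩ y ⟨b, rfl⟩
    rw [hskew, hττ, map_zero, neg_zero]
  -- E ⊓ φ E = ⊥
  have hinf : E ⊓ Submodule.map φ E = ⊥ := by
    rw [Submodule.eq_bot_iff]
    rintro x ⟨hx, e', he', rfl⟩
    by_contra hne
    have hp := hpos _ hne
    rw [hφφ] at hp
    have := hiso _ he' _ hx
    linarith
  have hmapfin : Module.finrank ℝ (Submodule.map φ E) = m := by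
    rw [← (Submodule.equivMapOfInjective φ hφinj E).finrank_eq, hrank]
  have hsup : E ⊔ Submodule.map φ E = ⊤ := by
    apply Submodule.eq_top_of_finrank_eq
    have := Submodule.finrank_sup_add_finrank_inf_eq E (Submodule.map φ E)
    rw [hinf, finrank_bot, hrank, hmapfin, hdim] at *
    omega
  have hdecomp : ∀ u : W, ∃ e ∈ E, ∃ f ∈ E, u = e + φ f := by
    intro u
    have hu : u ∈ E ⊔ Submodule.map φ E := by rw [hsup]; trivial
    obtain ⟨y, hy, z, hz, rfl⟩ := Submodule.mem_sup.mp hu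
    obtain ⟨f, hf, rfl⟩ := hz
    exact ⟨y, hy, f, hf, rfl⟩
  -- pointwise formulas for Φ
  have hΦE : ∀ e ∈ E, Φ e = τ (φ e) := by
    intro e he
    show τ (φ e) + φ (τ e) = τ (φ e)
    rw [hτE e he, map_zero, add_zero]
  have hΦφE : ∀ f ∈ E, Φ (φ f) = φ (τ (φ f)) := by
    intro f hf
    show τ (φ (φ f)) + φ (τ (φ f)) = φ (τ (φ f))
    rw [hφφ, hτE f hf, zero_add]
  have hτφmem : ∀ u, τ (φ u) ∈ E := fun u => ⟨φ u, rfl⟩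
  -- Φ² = -1 pointwise
  have hΦ2 : ∀ u, Φ (Φ u) = -u := by
    intro u
    obtain ⟨e, he, f, hf, rfl⟩ := hdecomp u
    rw [map_add, hΦE e he, hΦφE f hf, map_add, hΦE _ (hτφmem _), hΦφE _ (hτφmem _),
      hcompat e he, hcompat f hf, map_neg, neg_add]
  have hΨ2 : ∀ u, Ψ (Ψ u) = u := by
    intro u
    obtain ⟨e, he, f, hf, rfl⟩ := hdecomp u
    rw [map_add, hΨE e he, hΨφE f hf, map_add, hΨE e he, map_neg, hΨφE f hf, neg_neg]
  -- g-skew for Φ (direct)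
  have hgskewΦ : ∀ u v, g (Φ u) v = - g u (Φ v) := by
    intro u v
    show g (τ (φ u) + φ (τ u)) v = - g u (τ (φ v) + φ (τ v))
    have e1 : g (τ (φ u)) v = - g u (φ (τ v)) := by
      have h := hφiso u (φ (τ v))
      rw [hφφ] at h
      rw [hskew, h]
    have e2 : g (φ (τ u)) v = - g u (τ (φ v)) := by
      have h := hφiso (φ v) (τ u)
      rw [hφφ] at h
      rw [hsym, h, hsym (φ v) (τ u), hskew]
    rw [map_add, LinearMap.add_apply, e1, e2, map_add]
    ring
  -- g-skew for Ψ (via decomposition)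
  have hgskewΨ : ∀ u v, g (Ψ u) v = - g u (Ψ v) := by
    intro u v
    obtain ⟨e, he, f, hf, rfl⟩ := hdecomp u
    obtain ⟨e', he', f', hf', rfl⟩ := hdecomp v
    have h1 : Ψ (e + φ f) = e + -(φ f) := by rw [map_add, hΨE e he, hΨφE f hf]
    have h2 : Ψ (e' + φ f') = e' + -(φ f') := by rw [map_add, hΨE e' he', hΨφE f' hf']
    rw [h1, h2]
    have z1 : g e e' = 0 := hiso e he e' he'
    have z2 : g (φ f) (φ f') = 0 := by rw [hφiso]; exact hiso f hf f' hf'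
    simp only [map_add, map_neg, LinearMap.add_apply, LinearMap.neg_apply]
    rw [z1, z2]
    try ring
  -- Φ ∘ φ = φ ∘ Φ
  have hΦφ : ∀ u, Φ (φ u) = φ (Φ u) := by
    intro u
    show τ (φ (φ u)) + φ (τ (φ u)) = φ (τ (φ u) + φ (τ u))
    rw [hφφ, map_add, hφφ, add_comm]
  -- φ ∘ Ψ = - Ψ ∘ φ
  have hφΨ : ∀ u, φ (Ψ u) = - Ψ (φ u) := by
    intro u
    obtain ⟨e, he, f, hf, rfl⟩ := hdecomp u
    have l1 : Ψ (e + φ f) = e + -φ f := by rw [map_add, hΨE e he, hΨφE f hf]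
    have l2 : Ψ (φ (e + φ f)) = -φ e + f := by
      have l3 : φ (e + φ f) = φ e + f := by rw [map_add, hφφ]
      rw [l3, map_add, hΨφE e he, hΨE f hf]
    rw [l1, l2, map_add, map_neg, hφφ, neg_add, neg_neg]
  refine ⟨?_, ?_, ?_, hgskewΦ, hgskewΨ, ?_, ?_, ?_⟩
  · ext u
    simp only [LinearMap.comp_apply, LinearMap.neg_apply, LinearMap.id_apply]
    exact hΦ2 u
  · ext u
    simp only [LinearMap.comp_apply, LinearMap.id_apply]
    exact hΨ2 u
  · ext u
    obtain ⟨e, he, f, hf, rfl⟩ := hdecomp u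
    simp only [LinearMap.comp_apply]
    have l1 : Φ (Ψ (e + φ f)) = τ (φ e) + -φ (τ (φ f)) := by
      rw [map_add, hΨE e he, hΨφE f hf, map_add, map_neg, hΦE e he, hΦφE f hf]
    have l2 : Ψ (Φ (e + φ f)) = τ (φ e) + -φ (τ (φ f)) := by
      rw [map_add, hΦE e he, hΦφE f hf, map_add, hΨE _ (hτφmem _), hΨφE _ (hτφmem _)]
    rw [l1, l2]
  · intro u v
    show g (φ (Φ u)) (Φ v) = g (φ u) v
    rw [← hΦφ, hgskewΦ, hΦ2]
    simp
  · intro u v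
    show g (φ (Ψ u)) (Ψ v) = g (φ u) v
    simp only [hφΨ, map_neg, LinearMap.neg_apply]
    rw [hgskewΨ, hΨ2]
    ring
  · ext u
    obtain ⟨e, he, f, hf, rfl⟩ := hdecomp u
    simp only [LinearMap.smul_apply, LinearMap.comp_apply, LinearMap.add_apply,
      LinearMap.id_apply]
    have l3 : φ (e + φ f) = φ e + f := by rw [map_add, hφφ]
    have l4 : Ψ (φ e + f) = -φ e + f := by rw [map_add, hΨφE e he, hΨE f hf]
    rw [map_add, l3, l4, hτE e he, zero_add, map_add, map_add, map_add, map_neg, hΦE f hf]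
    module
end
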